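/- Let m < n ≤ k be positive integers. The restriction map p : V_n(ℝ^k) → V_m(ℝ^k), sending an orthonormal n-frame (v₁, …, v_n) in ℝ^k to its first m vectors (v₁, …, v_m), is a fiber bundle with fiber V_{n−m}(ℝ^{k−m}): p is continuous and surjective, and for every orthonormal m-frame w in ℝ^k there exist an open neighborhood U of w in V_m(ℝ^k) and a homeomorphism φ : p⁻¹(U) → U × V_{n−m}(ℝ^{k−m}) such that the first coordinate of φ(v) equals p(v) for all v ∈ p⁻¹(U). -/

import Mathlib

/-- The Stiefel manifold `V_n(ℝ^k)` of orthonormal `n`-frames in `ℝ^k`, topologized as a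
subspace of the product of `n` copies of `ℝ^k`. -/
abbrev RealStiefel (n k : ℕ) :=
  {v : Fin n → EuclideanSpace ℝ (Fin k) // Orthonormal ℝ v}

/-- The restriction map `V_n(ℝ^k) → V_m(ℝ^k)` sending an orthonormal `n`-frame
`(v₁, …, v_n)` to its first `m` vectors `(v₁, …, v_m)`. -/
def stiefelProj (m n k : ℕ) (h : m ≤ n) : RealStiefel n k → RealStiefel m k :=
  fun v => ⟨fun i => v.1 (Fin.castLE h i), v.2.comp _ (Fin.castLE_injective h)⟩


open Finset
open InnerProductSpace

noncomputable section StiefelAux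

instance (priority := 10000) stiefelAux_finWFLT (k : ℕ) : WellFoundedLT (Fin k) :=
  Finite.to_wellFoundedLT

local notation "ℝ^" k => EuclideanSpace ℝ (Fin k)
local notation "⟪" x ", " y "⟫" => @inner ℝ _ _ x y

lemma gs_contOn (k : ℕ) [NeZero k] (n : Fin k) :
    ContinuousOn (fun f : Fin k → ℝ^k => gramSchmidt ℝ f n)
      {f : Fin k → ℝ^k | LinearIndependent ℝ f} := by
  suffices h : ∀ N : ℕ, ∀ n : Fin k, (n : ℕ) < N → ContinuousOn
      (fun f : Fin k → ℝ^k => gramSchmidt ℝ f n)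
      {f : Fin k → ℝ^k | LinearIndependent ℝ f} from h (n + 1) n (by omega)
  intro N
  induction N with
  | zero => exact fun n hn => absurd hn (by omega)
  | succ N IHN =>
  intro n hn
  have IH : ∀ i : Fin k, i < n → ContinuousOn
      (fun f : Fin k → ℝ^k => gramSchmidt ℝ f i)
      {f : Fin k → ℝ^k | LinearIndependent ℝ f} :=
    fun i hi => IHN i (by omega)
  have key : ∀ f : Fin k → ℝ^k, gramSchmidt ℝ f n
      = f n - ∑ i ∈ Iio n, (⟪gramSchmidt ℝ f i, f n⟫ / ((‖gramSchmidt ℝ f i‖ : ℝ) ^ 2))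
          • gramSchmidt ℝ f i := by
    intro f
    rw [gramSchmidt_def]
    congr 1
    exact Finset.sum_congr rfl fun i _ => Submodule.starProjection_singleton ℝ (f n)
  refine ContinuousOn.congr ?_ (fun f _ => key f)
  refine ContinuousOn.sub (continuous_apply n).continuousOn ?_
  refine continuousOn_finset_sum _ (fun i hi => ?_)
  have hgs := IH i (mem_Iio.mp hi)
  refine ContinuousOn.fun_smul (ContinuousOn.div (hgs.inner (continuous_apply n).continuousOn)
    ((hgs.norm).pow 2) ?_) hgs
  intro f hf
  exact pow_ne_zero 2 (norm_ne_zero_iff.mpr (gramSchmidt_ne_zero i hf))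

lemma gsn_contOn (k : ℕ) [NeZero k] (n : Fin k) :
    ContinuousOn (fun f : Fin k → ℝ^k => gramSchmidtNormed ℝ f n)
      {f : Fin k → ℝ^k | LinearIndependent ℝ f} := by
  have h := gs_contOn k n
  have key : ∀ f : Fin k → ℝ^k, gramSchmidtNormed ℝ f n
      = (‖gramSchmidt ℝ f n‖ : ℝ)⁻¹ • gramSchmidt ℝ f n := fun f => rfl
  refine ContinuousOn.congr ?_ (fun f _ => key f)
  refine ContinuousOn.fun_smul (ContinuousOn.inv₀ h.norm ?_) h
  intro f hf
  simpa using gramSchmidt_ne_zero n hf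

lemma gs_prefix {k m : ℕ} [NeZero k] (f : Fin k → ℝ^k)
    (h : ∀ i j : Fin k, (i : ℕ) < m → (j : ℕ) < m → ⟪f i, f j⟫ = if i = j then 1 else 0) :
    ∀ i : Fin k, (i : ℕ) < m → gramSchmidt ℝ f i = f i := by
  suffices hN : ∀ N : ℕ, ∀ i : Fin k, (i : ℕ) < N → (i : ℕ) < m → gramSchmidt ℝ f i = f i from
    fun i him => hN (i + 1) i (by omega) him
  intro N
  induction N with
  | zero => exact fun i hi => absurd hi (by omega)
  | succ N IHN =>
  intro i hiN him
  have IH : ∀ j : Fin k, j < i → (j : ℕ) < m → gramSchmidt ℝ f j = f j :=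
    fun j hj hjm => IHN j (by omega) hjm
  rw [gramSchmidt_def]
  have hz : ∀ j ∈ Iio i, (ℝ ∙ gramSchmidt ℝ f j).starProjection (f i) = 0 := by
    intro j hj
    have hji : j < i := mem_Iio.mp hj
    have hjm : (j : ℕ) < m := lt_trans hji him
    rw [IH j hji hjm, Submodule.starProjection_singleton, h j i hjm him, if_neg hji.ne]
    simp
  rw [Finset.sum_congr rfl hz, Finset.sum_const_zero, sub_zero]

lemma gsn_prefix {k m : ℕ} [NeZero k] (f : Fin k → ℝ^k)
    (h : ∀ i j : Fin k, (i : ℕ) < m → (j : ℕ) < m → ⟪f i, f j⟫ = if i = j then 1 else 0) :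
    ∀ i : Fin k, (i : ℕ) < m → gramSchmidtNormed ℝ f i = f i := by
  intro i him
  have h1 : ‖f i‖ = 1 := by
    have := h i i him him
    rw [if_pos rfl, real_inner_self_eq_norm_sq] at this
    nlinarith [norm_nonneg (f i)]
  rw [gramSchmidtNormed, gs_prefix f h i him, h1]
  simp

def embL {m k : ℕ} (h : m ≤ k) (i : Fin (k - m)) : Fin k := ⟨m + i, by omega⟩

lemma embL_injective {m k : ℕ} (h : m ≤ k) : Function.Injective (embL h) := by
  intro a b hab
  have := congrArg Fin.val hab
  simp only [embL] at this
  exact Fin.ext (by omega)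

lemma sum_split {k m : ℕ} (hmk : m ≤ k) {M : Type*} [AddCommMonoid M] (h : Fin k → M)
    (hz : ∀ i : Fin k, (i : ℕ) < m → h i = 0) :
    ∑ i, h i = ∑ j : Fin (k - m), h (embL hmk j) := by
  have hp : m + (k - m) = k := by omega
  rw [← Fintype.sum_equiv (finSumFinEquiv.trans (finCongr hp)) _ h (fun _ => rfl)]
  rw [Fintype.sum_sum_type]
  have h0 : ∀ a : Fin m, h ((finSumFinEquiv.trans (finCongr hp)) (Sum.inl a)) = 0 := by
    intro a
    exact hz _ (by simp)
  rw [Finset.sum_congr rfl (fun a _ => h0 a), Finset.sum_const_zero, zero_add]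
  exact Finset.sum_congr rfl fun j _ => congrArg h (Fin.ext (by simp [embL]))

lemma exists_onb_extend {m k : ℕ} (hmk : m ≤ k) (w : Fin m → ℝ^k)
    (hw : Orthonormal ℝ w) :
    ∃ b : OrthonormalBasis (Fin k) ℝ (ℝ^k),
      ∀ i : Fin m, b (Fin.castLE hmk i) = w i := by
  classical
  set v : Fin k → ℝ^k := fun i => if h : (i : ℕ) < m then w ⟨i, h⟩ else 0 with hv
  have hres : Orthonormal ℝ (Set.restrict {i : Fin k | (i : ℕ) < m} v) := by
    have heq : Set.restrict {i : Fin k | (i : ℕ) < m} v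
        = w ∘ (fun i : {i : Fin k | (i : ℕ) < m} => (⟨(i : Fin k), i.2⟩ : Fin m)) := by
      funext i
      simp only [Set.restrict, Function.comp]
      exact dif_pos i.2
    rw [heq]
    refine hw.comp _ ?_
    intro a b hab
    apply Subtype.ext
    apply Fin.ext
    have := congrArg Fin.val hab
    simpa using this
  obtain ⟨b, hb⟩ := hres.exists_orthonormalBasis_extension_of_card_eq (by simp)
  refine ⟨b, fun i => ?_⟩
  have hmem : (Fin.castLE hmk i : Fin k) ∈ {i : Fin k | (i : ℕ) < m} := by
    simpa using i.2
  rw [hb _ hmem]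
  simp only [v]
  rw [dif_pos (show ((Fin.castLE hmk i : Fin k) : ℕ) < m from i.2)]
  exact congrArg w (Fin.ext rfl)


def frameF (m : ℕ) {k : ℕ} (e : OrthonormalBasis (Fin k) ℝ (ℝ^k)) (w : Fin m → ℝ^k) :
    Fin k → ℝ^k := fun i => if h : (i : ℕ) < m then w ⟨i, h⟩ else e i

lemma frameF_cont (m : ℕ) {k : ℕ} (e : OrthonormalBasis (Fin k) ℝ (ℝ^k)) :
    Continuous (frameF m e) := by
  refine continuous_pi fun i => ?_
  by_cases h : (i : ℕ) < m
  · simp only [frameF, dif_pos h]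
    exact continuous_apply _
  · simp only [frameF, dif_neg h]
    exact continuous_const

variable {m n k : ℕ}

noncomputable def gsn (m : ℕ) {k : ℕ} [NeZero k] (e : OrthonormalBasis (Fin k) ℝ (ℝ^k))
    (w : Fin m → ℝ^k) : Fin k → ℝ^k :=
  gramSchmidtNormed ℝ (frameF m e w)

lemma gsn_orthonormal [NeZero k] (e : OrthonormalBasis (Fin k) ℝ (ℝ^k)) {w : Fin m → ℝ^k}
    (hli : LinearIndependent ℝ (frameF m e w)) : Orthonormal ℝ (gsn m e w) :=
  gramSchmidtNormed_orthonormal hli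

lemma gsn_pre [NeZero k] (e : OrthonormalBasis (Fin k) ℝ (ℝ^k)) {w : Fin m → ℝ^k}
    (hw : Orthonormal ℝ w) (i : Fin k) (him : (i : ℕ) < m) :
    gsn m e w i = w ⟨i, him⟩ := by
  have h : ∀ i j : Fin k, (i : ℕ) < m → (j : ℕ) < m →
      ⟪frameF m e w i, frameF m e w j⟫ = if i = j then 1 else 0 := by
    intro i j hi hj
    simp only [frameF, dif_pos hi, dif_pos hj]
    rw [orthonormal_iff_ite.mp hw]
    by_cases hij : i = j
    · subst hij; simp
    · rw [if_neg (fun hc => hij (Fin.ext (by simpa [Fin.ext_iff] using hc))), if_neg hij]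
  rw [gsn, gsn_prefix _ h i him]
  simp only [frameF, dif_pos him]

lemma gsn_expansion [NeZero k] (e : OrthonormalBasis (Fin k) ℝ (ℝ^k)) {w : Fin m → ℝ^k}
    (hli : LinearIndependent ℝ (frameF m e w)) (x : ℝ^k) :
    ∑ i, ⟪gsn m e w i, x⟫ • gsn m e w i = x := by
  have hsp : ⊤ ≤ Submodule.span ℝ (Set.range (gsn m e w)) := by
    rw [gsn, span_gramSchmidtNormed_range, span_gramSchmidt,
      LinearIndependent.span_eq_top_of_card_eq_finrank hli (by simp)]
  have := (OrthonormalBasis.mk (gsn_orthonormal e hli) hsp).sum_repr' x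
  simpa only [OrthonormalBasis.coe_mk] using this

lemma gsn_parseval [NeZero k] (e : OrthonormalBasis (Fin k) ℝ (ℝ^k)) {w : Fin m → ℝ^k}
    (hli : LinearIndependent ℝ (frameF m e w)) (x y : ℝ^k) :
    ∑ i, ⟪x, gsn m e w i⟫ * ⟪gsn m e w i, y⟫ = ⟪x, y⟫ := by
  have hsp : ⊤ ≤ Submodule.span ℝ (Set.range (gsn m e w)) := by
    rw [gsn, span_gramSchmidtNormed_range, span_gramSchmidt,
      LinearIndependent.span_eq_top_of_card_eq_finrank hli (by simp)]
  have := (OrthonormalBasis.mk (gsn_orthonormal e hli) hsp).sum_inner_mul_inner x y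
  simpa only [OrthonormalBasis.coe_mk] using this

noncomputable def trivFwd (m n k : ℕ) [NeZero k] (hmn : m ≤ n) (hmk : m ≤ k)
    (e : OrthonormalBasis (Fin k) ℝ (ℝ^k)) (v : Fin n → ℝ^k) :
    Fin (n - m) → EuclideanSpace ℝ (Fin (k - m)) :=
  fun j => (WithLp.equiv 2 (Fin (k - m) → ℝ)).symm
    (fun i => ⟪gsn m e (fun a => v (Fin.castLE hmn a)) (embL hmk i), v (embL hmn j)⟫)

noncomputable def trivBwd (m n k : ℕ) [NeZero k] (hmn : m ≤ n) (hmk : m ≤ k)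
    (e : OrthonormalBasis (Fin k) ℝ (ℝ^k)) (w : Fin m → ℝ^k)
    (u : Fin (n - m) → EuclideanSpace ℝ (Fin (k - m))) : Fin n → ℝ^k :=
  fun a => if h : (a : ℕ) < m then w ⟨a, h⟩
    else ∑ i : Fin (k - m),
      WithLp.equiv 2 (Fin (k - m) → ℝ) (u ⟨(a : ℕ) - m, by omega⟩) i • gsn m e w (embL hmk i)

lemma inner_symm_pi (q : ℕ) (f g : Fin q → ℝ) :
    (⟪(WithLp.equiv 2 (Fin q → ℝ)).symm f, (WithLp.equiv 2 (Fin q → ℝ)).symm g⟫ : ℝ)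
      = ∑ i, f i * g i := by
  simp [PiLp.inner_apply, mul_comm]

lemma fwd_orthonormal [NeZero k] (hmn : m ≤ n) (hmk : m ≤ k)
    (e : OrthonormalBasis (Fin k) ℝ (ℝ^k)) {v : Fin n → ℝ^k}
    (hv : Orthonormal ℝ v)
    (hli : LinearIndependent ℝ (frameF m e (fun a => v (Fin.castLE hmn a)))) :
    Orthonormal ℝ (trivFwd m n k hmn hmk e v) := by
  have hw : Orthonormal ℝ (fun a => v (Fin.castLE hmn a)) :=
    hv.comp _ (Fin.castLE_injective hmn)
  rw [orthonormal_iff_ite]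
  intro j j'
  have key : (⟪trivFwd m n k hmn hmk e v j, trivFwd m n k hmn hmk e v j'⟫ : ℝ)
      = ∑ i : Fin (k - m), ⟪v (embL hmn j), gsn m e (fun a => v (Fin.castLE hmn a)) (embL hmk i)⟫
          * ⟪gsn m e (fun a => v (Fin.castLE hmn a)) (embL hmk i), v (embL hmn j')⟫ := by
    simp only [trivFwd]
    rw [inner_symm_pi]
    exact Finset.sum_congr rfl fun i _ => by
      rw [real_inner_comm (gsn m e (fun a => v (Fin.castLE hmn a)) (embL hmk i)) (v (embL hmn j))]
  rw [key]
  have hzero : ∀ i : Fin k, (i : ℕ) < m →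
      ⟪v (embL hmn j), gsn m e (fun a => v (Fin.castLE hmn a)) i⟫
        * ⟪gsn m e (fun a => v (Fin.castLE hmn a)) i, v (embL hmn j')⟫ = 0 := by
    intro i him
    rw [gsn_pre e hw i him]
    have hne : embL hmn j ≠ Fin.castLE hmn ⟨(i : ℕ), him⟩ := by
      intro hc
      have := congrArg Fin.val hc
      simp only [embL, Fin.castLE] at this
      omega
    rw [hv.2 hne, zero_mul]
  rw [← sum_split hmk _ hzero, gsn_parseval e hli, orthonormal_iff_ite.mp hv]
  by_cases hjj : j = j'
  · subst hjj; simp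
  · rw [if_neg (fun hc => hjj (embL_injective hmn hc)), if_neg hjj]

lemma bwd_proj [NeZero k] (hmn : m ≤ n) (hmk : m ≤ k)
    (e : OrthonormalBasis (Fin k) ℝ (ℝ^k)) (w : Fin m → ℝ^k)
    (u : Fin (n - m) → EuclideanSpace ℝ (Fin (k - m))) (i : Fin m) :
    trivBwd m n k hmn hmk e w u (Fin.castLE hmn i) = w i := by
  simp only [trivBwd]
  rw [dif_pos (show ((Fin.castLE hmn i : Fin n) : ℕ) < m from i.2)]
  exact congrArg w (Fin.ext rfl)

lemma euc_inner (q : ℕ) (x y : EuclideanSpace ℝ (Fin q)) :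
    (⟪x, y⟫ : ℝ) = ∑ i, x i * y i := by
  simp [PiLp.inner_apply, mul_comm]

lemma bwd_orthonormal [NeZero k] (hmn : m ≤ n) (hmk : m ≤ k)
    (e : OrthonormalBasis (Fin k) ℝ (ℝ^k)) {w : Fin m → ℝ^k}
    {u : Fin (n - m) → EuclideanSpace ℝ (Fin (k - m))}
    (hw : Orthonormal ℝ w) (hli : LinearIndependent ℝ (frameF m e w))
    (hu : Orthonormal ℝ u) :
    Orthonormal ℝ (trivBwd m n k hmn hmk e w u) := by
  have hGON := gsn_orthonormal e hli
  have hcross : ∀ (a : Fin n) (ha : (a : ℕ) < m) (i : Fin (k - m)),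
      (⟪w ⟨a, ha⟩, gsn m e w (embL hmk i)⟫ : ℝ) = 0 := by
    intro a ha i
    have h1 : gsn m e w ⟨(a : ℕ), by omega⟩ = w ⟨a, ha⟩ := gsn_pre e hw _ ha
    rw [← h1]
    refine hGON.2 ?_
    intro hc
    have := congrArg Fin.val hc
    simp only [embL] at this
    omega
  rw [orthonormal_iff_ite]
  intro a b
  by_cases ha : (a : ℕ) < m <;> by_cases hb : (b : ℕ) < m
  · simp only [trivBwd, dif_pos ha, dif_pos hb]
    rw [orthonormal_iff_ite.mp hw]
    by_cases hab : a = b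
    · subst hab; simp
    · rw [if_neg (fun hc => hab (Fin.ext (by simpa [Fin.ext_iff] using hc))), if_neg hab]
  · simp only [trivBwd, dif_pos ha, dif_neg hb]
    rw [inner_sum, if_neg (show a ≠ b from fun hc => hb (hc ▸ ha))]
    refine Finset.sum_eq_zero fun i _ => ?_
    rw [real_inner_smul_right, hcross a ha i, mul_zero]
  · simp only [trivBwd, dif_neg ha, dif_pos hb]
    rw [sum_inner, if_neg (show a ≠ b from fun hc => ha (hc ▸ hb))]
    refine Finset.sum_eq_zero fun i _ => ?_
    rw [real_inner_smul_left, real_inner_comm, hcross b hb i, mul_zero]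
  · simp only [trivBwd, dif_neg ha, dif_neg hb]
    rw [sum_inner]
    have hstep : ∀ i ∈ Finset.univ,
        (⟪WithLp.equiv 2 (Fin (k - m) → ℝ) (u ⟨(a : ℕ) - m, by omega⟩) i • gsn m e w (embL hmk i),
          ∑ i' : Fin (k - m), WithLp.equiv 2 (Fin (k - m) → ℝ) (u ⟨(b : ℕ) - m, by omega⟩) i'
            • gsn m e w (embL hmk i')⟫ : ℝ)
        = WithLp.equiv 2 (Fin (k - m) → ℝ) (u ⟨(a : ℕ) - m, by omega⟩) i
            * WithLp.equiv 2 (Fin (k - m) → ℝ) (u ⟨(b : ℕ) - m, by omega⟩) i := by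
      intro i _
      rw [real_inner_smul_left, inner_sum, Finset.sum_eq_single i]
      · rw [real_inner_smul_right, orthonormal_iff_ite.mp hGON, if_pos rfl, mul_one]
      · intro i' _ hii'
        rw [real_inner_smul_right, orthonormal_iff_ite.mp hGON,
          if_neg (fun hc => hii' (embL_injective hmk hc).symm), mul_zero]
      · intro hmem
        exact absurd (Finset.mem_univ i) hmem
    rw [Finset.sum_congr rfl hstep]
    have heq : ∑ i : Fin (k - m),
        WithLp.equiv 2 (Fin (k - m) → ℝ) (u ⟨(a : ℕ) - m, by omega⟩) i
          * WithLp.equiv 2 (Fin (k - m) → ℝ) (u ⟨(b : ℕ) - m, by omega⟩) i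
        = ⟪u ⟨(a : ℕ) - m, by omega⟩, u ⟨(b : ℕ) - m, by omega⟩⟫ := by
      rw [euc_inner]
      exact Finset.sum_congr rfl fun i _ => rfl
    rw [heq, orthonormal_iff_ite.mp hu]
    by_cases hab : a = b
    · subst hab; simp
    · rw [if_neg (fun hc : (⟨(a : ℕ) - m, _⟩ : Fin (n - m)) = ⟨(b : ℕ) - m, _⟩ =>
        hab (Fin.ext (by have := congrArg Fin.val hc; simp only at this; omega))), if_neg hab]

lemma bwd_fwd [NeZero k] (hmn : m ≤ n) (hmk : m ≤ k)
    (e : OrthonormalBasis (Fin k) ℝ (ℝ^k)) {v : Fin n → ℝ^k}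
    (hv : Orthonormal ℝ v)
    (hli : LinearIndependent ℝ (frameF m e (fun a => v (Fin.castLE hmn a)))) :
    trivBwd m n k hmn hmk e (fun a => v (Fin.castLE hmn a)) (trivFwd m n k hmn hmk e v) = v := by
  have hw : Orthonormal ℝ (fun a => v (Fin.castLE hmn a)) :=
    hv.comp _ (Fin.castLE_injective hmn)
  funext a
  by_cases ha : (a : ℕ) < m
  · simp only [trivBwd, dif_pos ha]
    exact congrArg v (Fin.ext rfl)
  · simp only [trivBwd, dif_neg ha]
    have hemb : embL hmn ⟨(a : ℕ) - m, by omega⟩ = a := Fin.ext (by simp only [embL]; omega)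
    have hcoord : ∀ i : Fin (k - m),
        WithLp.equiv 2 (Fin (k - m) → ℝ)
            (trivFwd m n k hmn hmk e v ⟨(a : ℕ) - m, by omega⟩) i
          = ⟪gsn m e (fun a => v (Fin.castLE hmn a)) (embL hmk i), v a⟫ := by
      intro i
      simp only [trivFwd, Equiv.apply_symm_apply]
      rw [hemb]
    have hzero : ∀ i : Fin k, (i : ℕ) < m →
        (⟪gsn m e (fun a => v (Fin.castLE hmn a)) i, v a⟫ : ℝ)
          • gsn m e (fun a => v (Fin.castLE hmn a)) i = 0 := by
      intro i him
      have h1 : gsn m e (fun a => v (Fin.castLE hmn a)) i = v (Fin.castLE hmn ⟨(i : ℕ), him⟩) :=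
        gsn_pre e hw i him
      have hne : Fin.castLE hmn ⟨(i : ℕ), him⟩ ≠ a := by
        intro hc
        have := congrArg Fin.val hc
        simp only [Fin.castLE] at this
        omega
      rw [h1, hv.2 hne, zero_smul]
    have hsum : (∑ i : Fin (k - m),
        WithLp.equiv 2 (Fin (k - m) → ℝ)
            (trivFwd m n k hmn hmk e v ⟨(a : ℕ) - m, by omega⟩) i
          • gsn m e (fun a => v (Fin.castLE hmn a)) (embL hmk i)) = v a := by
      rw [Finset.sum_congr rfl (fun i _ => by rw [hcoord i]), ← sum_split hmk _ hzero,
        gsn_expansion e hli]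
    exact hsum

lemma fwd_bwd [NeZero k] (hmn : m ≤ n) (hmk : m ≤ k)
    (e : OrthonormalBasis (Fin k) ℝ (ℝ^k)) {w : Fin m → ℝ^k}
    {u : Fin (n - m) → EuclideanSpace ℝ (Fin (k - m))}
    (hli : LinearIndependent ℝ (frameF m e w)) :
    trivFwd m n k hmn hmk e (trivBwd m n k hmn hmk e w u) = u := by
  have hGON := gsn_orthonormal e hli
  have hproj : (fun a => trivBwd m n k hmn hmk e w u (Fin.castLE hmn a)) = w :=
    funext (bwd_proj hmn hmk e w u)
  funext j
  simp only [trivFwd, hproj]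
  rw [Equiv.symm_apply_eq]
  funext i
  have hma : ¬ ((embL hmn j : Fin n) : ℕ) < m := by simp [embL]
  simp only [trivBwd, dif_neg hma]
  have hj : (⟨((embL hmn j : Fin n) : ℕ) - m, by omega⟩ : Fin (n - m)) = j :=
    Fin.ext (by simp [embL])
  rw [inner_sum, Finset.sum_eq_single i]
  · rw [real_inner_smul_right, orthonormal_iff_ite.mp hGON, if_pos rfl, mul_one]
    exact congrArg (fun t : Fin (n - m) => WithLp.equiv 2 (Fin (k - m) → ℝ) (u t) i) hj
  · intro i' _ hi'
    rw [real_inner_smul_right, orthonormal_iff_ite.mp hGON,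
      if_neg (fun hc => hi' (embL_injective hmk hc).symm), mul_zero]
  · exact fun hmem => absurd (Finset.mem_univ i) hmem

/-- For positive integers `m < n ≤ k`, the restriction map `p : V_n(ℝ^k) → V_m(ℝ^k)`
(sending an orthonormal `n`-frame to its first `m` vectors) is a fiber bundle with fiber
`V_{n-m}(ℝ^{k-m})`: it is continuous and surjective, and every orthonormal `m`-frame in
`ℝ^k` has an open neighborhood `U` over which `p` is trivial, via a homeomorphism
`p⁻¹(U) ≃ U × V_{n-m}(ℝ^{k-m})` whose first coordinate is `p`. -/
theorem stiefelProj_isFiberBundle (m n k : ℕ) (hm : 0 < m) (hmn : m < n) (hnk : n ≤ k) :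
    Continuous (stiefelProj m n k hmn.le) ∧
    Function.Surjective (stiefelProj m n k hmn.le) ∧
    ∀ w : RealStiefel m k,
      ∃ U : Set (RealStiefel m k), IsOpen U ∧ w ∈ U ∧
        ∃ φ : {v : RealStiefel n k // stiefelProj m n k hmn.le v ∈ U} ≃ₜ
            U × RealStiefel (n - m) (k - m),
          ∀ v : {v : RealStiefel n k // stiefelProj m n k hmn.le v ∈ U},
            ((φ v).1 : RealStiefel m k) = stiefelProj m n k hmn.le v.1 := by
  haveI : NeZero k := ⟨by omega⟩
  have hmk : m ≤ k := le_trans hmn.le hnk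
  have hpc : Continuous (stiefelProj m n k hmn.le) := by
    refine Continuous.subtype_mk ?_ _
    exact continuous_pi fun i => (continuous_apply _).comp continuous_subtype_val
  refine ⟨hpc, ?_, ?_⟩
  · intro w
    obtain ⟨b, hb⟩ := exists_onb_extend hmk w.1 w.2
    refine ⟨⟨fun i => b (Fin.castLE hnk i), b.orthonormal.comp _ (Fin.castLE_injective _)⟩, ?_⟩
    apply Subtype.ext
    funext i
    show b (Fin.castLE hnk (Fin.castLE hmn.le i)) = w.1 i
    rw [← hb i]
    exact congrArg b (Fin.ext rfl)
  · intro w₀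
    obtain ⟨e, he⟩ := exists_onb_extend hmk w₀.1 w₀.2
    refine ⟨{w : RealStiefel m k | LinearIndependent ℝ (frameF m e w.1)}, ?_, ?_, ?_⟩
    · exact isOpen_setOf_linearIndependent.preimage ((frameF_cont m e).comp continuous_subtype_val)
    · show LinearIndependent ℝ (frameF m e w₀.1)
      have hFe : frameF m e w₀.1 = ⇑e := by
        funext i
        by_cases h : (i : ℕ) < m
        · simp only [frameF, dif_pos h]
          rw [← he ⟨(i : ℕ), h⟩]
          exact congrArg e (Fin.ext rfl)
        · simp only [frameF, dif_neg h]
      rw [hFe, ← e.coe_toBasis]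
      exact e.toBasis.linearIndependent
    · refine ⟨⟨⟨fun v => (⟨stiefelProj m n k hmn.le v.1, v.2⟩,
          ⟨trivFwd m n k hmn.le hmk e v.1.1, fwd_orthonormal hmn.le hmk e v.1.2 v.2⟩),
        fun z => ⟨⟨trivBwd m n k hmn.le hmk e z.1.1.1 z.2.1,
          bwd_orthonormal hmn.le hmk e z.1.1.2 z.1.2 z.2.2⟩, by
            show LinearIndependent ℝ (frameF m e
              (fun i => trivBwd m n k hmn.le hmk e z.1.1.1 z.2.1 (Fin.castLE hmn.le i)))
            rw [funext (bwd_proj hmn.le hmk e z.1.1.1 z.2.1)]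
            exact z.1.2⟩,
        ?_, ?_⟩, ?_, ?_⟩, fun v => rfl⟩
      · intro v
        apply Subtype.ext
        apply Subtype.ext
        show trivBwd m n k hmn.le hmk e (fun i => v.1.1 (Fin.castLE hmn.le i))
          (trivFwd m n k hmn.le hmk e v.1.1) = v.1.1
        exact bwd_fwd hmn.le hmk e v.1.2 v.2
      · intro z
        refine Prod.ext ?_ ?_
        · apply Subtype.ext
          apply Subtype.ext
          funext i
          exact bwd_proj hmn.le hmk e z.1.1.1 z.2.1 i
        · apply Subtype.ext
          exact fwd_bwd hmn.le hmk e z.1.2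
      · refine Continuous.prodMk ?_ ?_
        · exact (hpc.comp continuous_subtype_val).subtype_mk _
        · refine Continuous.subtype_mk ?_ _
          refine continuous_pi fun j => ?_
          show Continuous fun v : {v : RealStiefel n k //
              stiefelProj m n k hmn.le v ∈ {w : RealStiefel m k |
                LinearIndependent ℝ (frameF m e w.1)}} =>
            (WithLp.equiv 2 (Fin (k - m) → ℝ)).symm
              (fun i => @inner ℝ _ _ (gsn m e (fun a => v.1.1 (Fin.castLE hmn.le a)) (embL hmk i))
                (v.1.1 (embL hmn.le j)))
          refine (PiLp.continuous_toLp _ _).comp (continuous_pi fun i => ?_)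
          refine Continuous.inner ?_ ?_
          · exact (gsn_contOn k (embL hmk i)).comp_continuous
              ((frameF_cont m e).comp (continuous_pi fun a =>
                (continuous_apply _).comp (continuous_subtype_val.comp continuous_subtype_val)))
              (fun v => v.2)
          · exact (continuous_apply _).comp (continuous_subtype_val.comp continuous_subtype_val)
      · refine Continuous.subtype_mk (Continuous.subtype_mk ?_ _) _
        refine continuous_pi fun a => ?_
        by_cases ha : (a : ℕ) < m
        · have hform : ∀ z : {w : RealStiefel m k | LinearIndependent ℝ (frameF m e w.1)} ×
              RealStiefel (n - m) (k - m),
              z.1.1.1 ⟨(a : ℕ), ha⟩ = trivBwd m n k hmn.le hmk e z.1.1.1 z.2.1 a := by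
            intro z
            simp only [trivBwd, dif_pos ha]
          refine Continuous.congr ?_ hform
          exact (continuous_apply _).comp
            (continuous_subtype_val.comp (continuous_subtype_val.comp continuous_fst))
        · have hform : ∀ z : {w : RealStiefel m k | LinearIndependent ℝ (frameF m e w.1)} ×
              RealStiefel (n - m) (k - m),
              (∑ i : Fin (k - m), WithLp.equiv 2 (Fin (k - m) → ℝ)
                  (z.2.1 ⟨(a : ℕ) - m, by omega⟩) i • gsn m e z.1.1.1 (embL hmk i))
                = trivBwd m n k hmn.le hmk e z.1.1.1 z.2.1 a := by
            intro z
            simp only [trivBwd, dif_neg ha]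
          refine Continuous.congr ?_ hform
          refine continuous_finset_sum _ fun i _ => ?_
          refine Continuous.fun_smul ?_ ?_
          · exact (continuous_apply i).comp ((PiLp.continuous_ofLp _ _).comp
              ((continuous_apply _).comp (continuous_subtype_val.comp continuous_snd)))
          · exact (gsn_contOn k (embL hmk i)).comp_continuous
              ((frameF_cont m e).comp
                (continuous_subtype_val.comp (continuous_subtype_val.comp continuous_fst)))
              (fun z => z.1.2)
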